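/- Let D̃ be the free three-dimensional Dirac operator with constant magnetic field of strength b ≥ 1 in the linear gauge, and let 1 ≤ P ≤ c b. Then the matrix norm of the resolvent kernel satisfies ‖(D̃² + P)^{-1}(ξ, ζ)‖ ≤ C b P^{-1/2} e^{−c|||ξ−ζ|||}/|||ξ−ζ|||, where |||ξ||| = (b ξ⊥² + P ξ₃²)^{1/2}. -/

import Mathlib

open Real

/-- The Mehler heat kernel of the two-dimensional magnetic Laplacian with constant
field `b` in symmetric gauge. -/
noncomputable def mehlerKernel (b t : ℝ) (ξ ζ : ℝ × ℝ) : ℂ :=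
  ((b / (4 * π * Real.sinh (b * t)) : ℝ) : ℂ) *
    Complex.exp
      (-(((b * Real.cosh (b * t) / Real.sinh (b * t) / 4 : ℝ) : ℂ)) *
          (((ξ.1 - ζ.1) ^ 2 + (ξ.2 - ζ.2) ^ 2 : ℝ) : ℂ)
        - Complex.I * ((b / 2 : ℝ) : ℂ) * ((ξ.2 * ζ.1 - ξ.1 * ζ.2 : ℝ) : ℂ))

/-- Diagonal entry (spin `σ³` eigenvalue `sgn = ±1`) of the resolvent kernel
`(D̃² + P)⁻¹(ξ, ζ)` of the constant-field Dirac operator, via the heat kernel formula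
`(D̃² + P)⁻¹ = ∫₀^∞ e^{−t(P + σ³ b)} e^{tΔ̃} e^{t ∂₃²} dt`, with the one-dimensional heat
kernel `e^{t∂₃²}(x, y) = (4πt)^{−1/2} e^{−(x−y)²/4t}`. -/
noncomputable def diracResolventEntry (b P sgn : ℝ) (ξ ζ : Fin 3 → ℝ) : ℂ :=
  ∫ t in Set.Ioi (0 : ℝ),
    ((Real.exp (-(t * (P + sgn * b))) : ℝ) : ℂ) *
      mehlerKernel b t (ξ 0, ξ 1) (ζ 0, ζ 1) *
      ((1 / Real.sqrt (4 * π * t) : ℝ) : ℂ) *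
      Complex.exp (-(((ξ 2 - ζ 2) ^ 2 / (4 * t) : ℝ) : ℂ))

namespace Stmt17Aux

open MeasureTheory Set

set_option maxHeartbeats 1000000

lemma sinh_le_mul_cosh {y : ℝ} (hy : 0 ≤ y) : Real.sinh y ≤ y * Real.cosh y := by
  have h : ∀ x : ℝ, HasDerivAt (fun u => u * Real.cosh u - Real.sinh u)
      (x * Real.sinh x) x := by
    intro x
    have := ((hasDerivAt_id x).mul (Real.hasDerivAt_cosh x)).sub (Real.hasDerivAt_sinh x)
    refine this.congr_deriv ?_
    simp only [id]; ring
  have mono : MonotoneOn (fun u => u * Real.cosh u - Real.sinh u) (Set.Ici 0) := by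
    apply monotoneOn_of_deriv_nonneg (convex_Ici 0)
    · exact ((continuous_id.mul Real.continuous_cosh).sub Real.continuous_sinh).continuousOn
    · intro x _
      exact (h x).differentiableAt.differentiableWithinAt
    · intro x hx
      rw [interior_Ici] at hx
      rw [(h x).deriv]
      exact mul_nonneg hx.le (Real.sinh_pos_iff.mpr hx).le
  have := mono (Set.self_mem_Ici) (Set.mem_Ici.mpr hy) hy
  simpa using this

lemma expSinhBound {b t : ℝ} (hb : 0 < b) (ht : 0 < t) {sgn : ℝ} (hsgn : sgn = 1 ∨ sgn = -1) :
    Real.exp (-(t * (sgn * b))) * b / Real.sinh (b * t) ≤ 2 * b + 1 / t := by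
  have hy : 0 < b * t := mul_pos hb ht
  have hs : 0 < Real.sinh (b * t) := Real.sinh_pos_iff.mpr hy
  set E := Real.exp (b * t) with hE
  have hA : 0 < E := Real.exp_pos _
  have hsq : 1 + 2 * (b * t) ≤ E ^ 2 := by
    have h1 := Real.add_one_le_exp (2 * (b * t))
    have h2 : Real.exp (2 * (b*t)) = E ^ 2 := by
      rw [hE, ← Real.exp_nat_mul]; norm_num [mul_comm]
    linarith
  have hsinh : Real.sinh (b * t) = (E ^ 2 - 1) / (2 * E) := by
    rw [Real.sinh_eq, Real.exp_neg, ← hE]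
    field_simp
  have hrhs : (2 * b + 1 / t) * Real.sinh (b * t)
      = ((2 * b * t + 1) * (E ^ 2 - 1)) / (2 * E * t) := by
    rw [hsinh]; field_simp [ht.ne', hA.ne']
  rw [div_le_iff₀ hs, hrhs]
  rcases hsgn with h | h <;> subst h
  · have hX : Real.exp (-(t * (1 * b))) = E⁻¹ := by
      rw [Real.exp_neg, hE]; ring_nf
    rw [hX, le_div_iff₀ (by positivity)]
    have hXb : E⁻¹ * b * (2 * E * t) = 2 * (b * t) := by field_simp
    rw [hXb]
    nlinarith [mul_pos hy hy]
  · have hX : Real.exp (-(t * (-1 * b))) = E := by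
      rw [hE]; ring_nf
    rw [hX, le_div_iff₀ (by positivity)]
    nlinarith [mul_pos hb ht]

lemma intA_val {β : ℝ} (hβ : 0 < β) :
    (∫ x in Ioi (0:ℝ), x ^ (-(1/2) : ℝ) * Real.exp (-β * x)) = Real.sqrt π / Real.sqrt β := by
  have h := integral_rpow_mul_exp_neg_mul_rpow (p := 1) (q := -(1/2)) (by norm_num) (by norm_num) hβ
  rw [show ∫ x in Ioi (0:ℝ), x ^ (-(1/2):ℝ) * Real.exp (-β * x ^ (1:ℝ)) =
      ∫ x in Ioi (0:ℝ), x ^ (-(1/2):ℝ) * Real.exp (-β * x) from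
    setIntegral_congr_fun measurableSet_Ioi (fun x _ => by rw [Real.rpow_one])] at h
  rw [h]
  rw [show (-(-(1/2:ℝ) + 1) / 1) = (-(1/2) : ℝ) by norm_num,
    show (-(1/2:ℝ) + 1) / 1 = (1/2 : ℝ) by norm_num, Real.Gamma_one_half_eq,
    Real.rpow_neg hβ.le, Real.sqrt_eq_rpow]
  rw [Real.sqrt_eq_rpow]
  field_simp

lemma intA_int {β : ℝ} (hβ : 0 < β) :
    IntegrableOn (fun x : ℝ => x ^ (-(1/2) : ℝ) * Real.exp (-β * x)) (Ioi 0) := by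
  have h := integrableOn_rpow_mul_exp_neg_mul_rpow (p := 1) (s := -(1/2)) (by norm_num) (by norm_num) hβ
  exact h.congr_fun (fun x _ => by simp only [Real.rpow_one]) measurableSet_Ioi

lemma intB_pt {a x : ℝ} (hx0 : 0 < x) :
    (|(-1:ℝ)| * x ^ ((-1:ℝ) - 1)) • ((x ^ (-1:ℝ)) ^ (-(1/2):ℝ) * Real.exp (-a * x ^ (-1:ℝ)))
      = x ^ (-(3/2) : ℝ) * Real.exp (-a / x) := by
  have hinv : x ^ (-1:ℝ) = x⁻¹ := Real.rpow_neg_one x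
  have h2 : (x ^ (-1:ℝ)) ^ (-(1/2):ℝ) = x ^ ((1/2):ℝ) := by
    rw [← Real.rpow_mul hx0.le]; norm_num
  rw [smul_eq_mul, h2, abs_of_nonpos (by norm_num : (-1:ℝ) ≤ 0), neg_neg, one_mul,
    show (-1:ℝ) - 1 = (-2:ℝ) by norm_num, hinv, ← div_eq_mul_inv, ← mul_assoc,
    ← Real.rpow_add hx0]
  norm_num

lemma intB_int {a : ℝ} (ha : 0 < a) :
    IntegrableOn (fun t : ℝ => t ^ (-(3/2) : ℝ) * Real.exp (-a / t)) (Ioi 0) := by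
  have h := (integrableOn_Ioi_comp_rpow_iff
      (fun x : ℝ => x ^ (-(1/2) : ℝ) * Real.exp (-a * x)) (p := -1) (by norm_num)).mpr
      (intA_int ha)
  exact h.congr_fun (fun x hx => intB_pt hx) measurableSet_Ioi

lemma intB_val {a : ℝ} (ha : 0 < a) :
    (∫ t in Ioi (0:ℝ), t ^ (-(3/2) : ℝ) * Real.exp (-a / t)) = Real.sqrt π / Real.sqrt a := by
  rw [← intA_val ha]
  rw [← integral_comp_rpow_Ioi (fun x : ℝ => x ^ (-(1/2) : ℝ) * Real.exp (-a * x))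
    (p := -1) (by norm_num)]
  exact (setIntegral_congr_fun measurableSet_Ioi (fun x hx => intB_pt hx)).symm

lemma normEntry (b t P sgn : ℝ) (hb : 0 < b) (ht : 0 < t) (ξ ζ : Fin 3 → ℝ) :
    ‖((Real.exp (-(t * (P + sgn * b))) : ℝ) : ℂ) *
      mehlerKernel b t (ξ 0, ξ 1) (ζ 0, ζ 1) *
      ((1 / Real.sqrt (4 * π * t) : ℝ) : ℂ) *
      Complex.exp (-(((ξ 2 - ζ 2) ^ 2 / (4 * t) : ℝ) : ℂ))‖
    = Real.exp (-(t * (P + sgn * b))) * (b / (4 * π * Real.sinh (b * t)) *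
        Real.exp (-(b * Real.cosh (b * t) / Real.sinh (b * t) / 4 *
          ((ξ 0 - ζ 0) ^ 2 + (ξ 1 - ζ 1) ^ 2)))) *
      (1 / Real.sqrt (4 * π * t)) *
      Real.exp (-((ξ 2 - ζ 2) ^ 2 / (4 * t))) := by
  have hs : 0 < Real.sinh (b * t) := Real.sinh_pos_iff.mpr (mul_pos hb ht)
  have hπ : 0 < π := Real.pi_pos
  simp only [mehlerKernel, norm_mul, Complex.norm_real, Real.norm_eq_abs, Complex.norm_exp,
    Complex.sub_re, Complex.mul_re, Complex.neg_re, Complex.ofReal_re, Complex.ofReal_im,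
    Complex.I_re, Complex.I_im, Complex.neg_im, Complex.mul_im]
  rw [abs_of_nonneg (by positivity : (0:ℝ) ≤ Real.exp (-(t * (P + sgn * b)))),
    abs_of_nonneg (by positivity : (0:ℝ) ≤ b / (4 * π * Real.sinh (b*t))),
    abs_of_nonneg (by positivity : (0:ℝ) ≤ 1 / Real.sqrt (4*π*t))]
  ring_nf

lemma pw {b P t r2 zz s2 sgn : ℝ} (hb : 1 ≤ b) (hP : 1 ≤ P) (ht : 0 < t)
    (hr2 : 0 ≤ r2) (hzz : 0 ≤ zz) (hs2 : s2 = r2 + zz) (hsgn : sgn = 1 ∨ sgn = -1) :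
    Real.exp (-(t * (P + sgn * b))) * (b / (4 * π * Real.sinh (b * t)) *
        Real.exp (-(b * Real.cosh (b * t) / Real.sinh (b * t) / 4 * r2))) *
      (1 / Real.sqrt (4 * π * t)) * Real.exp (-(zz / (4 * t)))
    ≤ (Real.exp (-(b * r2 / 8) - Real.sqrt (P * s2) / 4) / (4 * π * Real.sqrt (4 * π))) *
        (2 * b * (t ^ (-(1/2) : ℝ) * Real.exp (-(P/2) * t))
          + t ^ (-(3/2) : ℝ) * Real.exp (-(s2/16) / t)) := by
  have hb0 : (0:ℝ) < b := lt_of_lt_of_le one_pos hb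
  have hP0 : (0:ℝ) < P := lt_of_lt_of_le one_pos hP
  have hπ : 0 < π := Real.pi_pos
  have hy : 0 < b * t := mul_pos hb0 ht
  have hS : 0 < Real.sinh (b * t) := Real.sinh_pos_iff.mpr hy
  have hsq2 : Real.sqrt (P * s2) ^ 2 = P * s2 := Real.sq_sqrt (by nlinarith)
  have hsq0 : 0 ≤ Real.sqrt (P * s2) := Real.sqrt_nonneg _
  have hB : Real.exp (-(t * (sgn * b))) * b / Real.sinh (b * t) ≤ 2 * b + 1 / t :=
    expSinhBound hb0 ht hsgn
  have hcoth : b * r2 / 8 + r2 / (8 * t) ≤ b * Real.cosh (b * t) / Real.sinh (b * t) / 4 * r2 := by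
    have h1 : Real.sinh (b * t) ≤ Real.cosh (b * t) := by
      nlinarith [Real.cosh_sub_sinh (b * t), Real.exp_pos (-(b * t))]
    have h2 : Real.sinh (b * t) ≤ (b * t) * Real.cosh (b * t) := sinh_le_mul_cosh hy.le
    have hC : 0 < Real.cosh (b * t) := Real.cosh_pos _
    have lhs_eq : b * r2 / 8 + r2 / (8 * t) = (b * r2 * t + r2) / (8 * t) := by
      field_simp
    have rhs_eq : b * Real.cosh (b * t) / Real.sinh (b * t) / 4 * r2
        = (b * Real.cosh (b * t) * r2) / (4 * Real.sinh (b * t)) := by ring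
    rw [lhs_eq, rhs_eq, div_le_div_iff₀ (by positivity) (by positivity)]
    nlinarith [mul_le_mul_of_nonneg_left h1 (by positivity : (0:ℝ) ≤ 4 * (b * r2 * t)),
      mul_le_mul_of_nonneg_left h2 (by positivity : (0:ℝ) ≤ 4 * r2)]
  have hexp : Real.exp (-(t * P)) * (Real.exp (-(b * r2 / 8 + r2 / (8 * t)))
        * Real.exp (-(zz / (4 * t))))
      ≤ Real.exp (-(b * r2 / 8) - Real.sqrt (P * s2) / 4)
        * (Real.exp (-(P/2) * t) * Real.exp (-(s2/16) / t)) := by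
    rw [← Real.exp_add, ← Real.exp_add, ← Real.exp_add, ← Real.exp_add]
    apply Real.exp_le_exp.mpr
    rw [← mul_le_mul_iff_of_pos_right ht]
    have e1 : (-(t * P) + (-(b * r2 / 8 + r2 / (8 * t)) + -(zz / (4 * t)))) * t
        = -(t^2 * P) - b * r2 * t / 8 - r2 / 8 - zz / 4 := by
      field_simp; ring
    have e2 : (-(b * r2 / 8) - Real.sqrt (P * s2) / 4 + (-(P/2) * t + -(s2/16) / t)) * t
        = -(b * r2 * t / 8) - Real.sqrt (P * s2) * t / 4 - P/2 * t^2 - s2/16 := by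
      field_simp; ring
    rw [e1, e2]
    nlinarith [sq_nonneg (2 * P * t - Real.sqrt (P * s2) / 2), hsq2, hP0, mul_pos hP0 ht,
      sq_nonneg t, hs2]
  -- assembly
  have ha : Real.exp (-(t * (P + sgn * b)))
      = Real.exp (-(t * P)) * Real.exp (-(t * (sgn * b))) := by
    rw [← Real.exp_add]; ring_nf
  have hu : 0 < Real.sqrt t := Real.sqrt_pos.mpr ht
  have h12 : t ^ (-(1/2) : ℝ) = 1 / Real.sqrt t := by
    rw [Real.rpow_neg ht.le, ← Real.sqrt_eq_rpow, one_div]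
  have h32 : t ^ (-(3/2) : ℝ) = 1 / (t * Real.sqrt t) := by
    rw [show (-(3/2) : ℝ) = (-1) + (-(1/2)) by norm_num, Real.rpow_add ht,
      Real.rpow_neg_one, Real.rpow_neg ht.le, ← Real.sqrt_eq_rpow]
    rw [one_div, mul_inv]
  have hE1 : Real.exp (-(P/2) * t) ≤ 1 := Real.exp_le_one_iff.mpr (by nlinarith)
  have hE2 : Real.exp (-(s2/16) / t) ≤ 1 := Real.exp_le_one_iff.mpr (by
    apply div_nonpos_of_nonpos_of_nonneg _ ht.le
    nlinarith)
  have hsplit4 : (1 : ℝ) / Real.sqrt (4 * π * t) = 1 / Real.sqrt (4 * π) * (1 / Real.sqrt t) := by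
    rw [Real.sqrt_mul (by positivity) t, one_div, mul_inv, one_div, one_div]
  set A := -(b * r2 / 8) - Real.sqrt (P * s2) / 4 with hA
  set EA := Real.exp A with hEA
  have hEA0 : 0 < EA := Real.exp_pos _
  have hmid : Real.exp (-(t * P)) * (Real.exp (-(b * Real.cosh (b * t) / Real.sinh (b * t) / 4 * r2))
        * Real.exp (-(zz / (4 * t))))
      ≤ EA * (Real.exp (-(P/2) * t) * Real.exp (-(s2/16) / t)) := by
    refine le_trans ?_ hexp
    have := Real.exp_le_exp.mpr (neg_le_neg hcoth)
    gcongr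
  calc Real.exp (-(t * (P + sgn * b))) * (b / (4 * π * Real.sinh (b * t)) *
        Real.exp (-(b * Real.cosh (b * t) / Real.sinh (b * t) / 4 * r2))) *
      (1 / Real.sqrt (4 * π * t)) * Real.exp (-(zz / (4 * t)))
      = (Real.exp (-(t * (sgn * b))) * b / Real.sinh (b * t)) *
        (Real.exp (-(t * P)) * (Real.exp (-(b * Real.cosh (b * t) / Real.sinh (b * t) / 4 * r2))
          * Real.exp (-(zz / (4 * t))))) * (1 / (4 * π) * (1 / Real.sqrt (4 * π * t))) := by
        rw [ha]; ring
    _ ≤ (2 * b + 1 / t) * (EA * (Real.exp (-(P/2) * t) * Real.exp (-(s2/16) / t))) *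
        (1 / (4 * π) * (1 / Real.sqrt (4 * π * t))) := by
        have hnn : (0:ℝ) ≤ 1 / (4 * π) * (1 / Real.sqrt (4 * π * t)) := by positivity
        apply mul_le_mul_of_nonneg_right _ hnn
        apply mul_le_mul hB hmid (by positivity) (by positivity)
    _ = (EA / (4 * π * Real.sqrt (4 * π))) *
        (2 * b * (1 / Real.sqrt t) * (Real.exp (-(P/2) * t) * Real.exp (-(s2/16) / t))
          + 1 / (t * Real.sqrt t) * (Real.exp (-(P/2) * t) * Real.exp (-(s2/16) / t))) := by
        rw [hsplit4]
        ring
    _ ≤ (EA / (4 * π * Real.sqrt (4 * π))) *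
        (2 * b * (1 / Real.sqrt t) * (Real.exp (-(P/2) * t) * 1)
          + 1 / (t * Real.sqrt t) * (1 * Real.exp (-(s2/16) / t))) := by
        gcongr <;> positivity
    _ = (EA / (4 * π * Real.sqrt (4 * π))) *
        (2 * b * (t ^ (-(1/2) : ℝ) * Real.exp (-(P/2) * t))
          + t ^ (-(3/2) : ℝ) * Real.exp (-(s2/16) / t)) := by
        rw [h12, h32]; ring

lemma final {κ b P r2 zz s2 M : ℝ} (hκ : 0 < κ) (hb : 1 ≤ b) (hP : 1 ≤ P) (hPκ : P ≤ κ * b)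
    (hr2 : 0 ≤ r2) (hzz : 0 ≤ zz) (hs2 : s2 = r2 + zz) (hs2pos : 0 < s2)
    (hM : M = b * r2 + P * zz) :
    (Real.exp (-(b * r2 / 8) - Real.sqrt (P * s2) / 4) / (4 * π * Real.sqrt (4 * π))) * (2 * b) *
        (Real.sqrt π / Real.sqrt (P/2))
      + (Real.exp (-(b * r2 / 8) - Real.sqrt (P * s2) / 4) / (4 * π * Real.sqrt (4 * π))) *
        (Real.sqrt π / Real.sqrt (s2/16))
    ≤ ((Real.exp (1/8) * (64 * Real.sqrt π + 4 * Real.sqrt π * Real.sqrt (κ * (1+κ))))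
          / (4 * π * Real.sqrt (4 * π))) * b / Real.sqrt P
        * Real.exp (-(1/16 * Real.sqrt M)) / Real.sqrt M := by
  have hb0 : (0:ℝ) < b := lt_of_lt_of_le one_pos hb
  have hP0 : (0:ℝ) < P := lt_of_lt_of_le one_pos hP
  have hπ : 0 < π := Real.pi_pos
  have hMpos : 0 < M := by nlinarith
  set Q := Real.sqrt M with hQ
  have hQ0 : 0 < Q := Real.sqrt_pos.mpr hMpos
  have hQ2 : Q ^ 2 = M := Real.sq_sqrt hMpos.le
  set E := Real.exp (-(1/16 * Q)) with hE
  have hE0 : 0 < E := Real.exp_pos _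
  have hE1 : E ≤ 1 := Real.exp_le_one_iff.mpr (by nlinarith)
  set W := (4 * π * Real.sqrt (4 * π)) with hW
  have hW0 : 0 < W := by positivity
  -- sqrt facts
  have hu2 : Real.sqrt (b * r2) ^ 2 = b * r2 := Real.sq_sqrt (by positivity)
  have hv2 : Real.sqrt (P * zz) ^ 2 = P * zz := Real.sq_sqrt (by positivity)
  have hu0 : 0 ≤ Real.sqrt (b * r2) := Real.sqrt_nonneg _
  have hv0 : 0 ≤ Real.sqrt (P * zz) := Real.sqrt_nonneg _
  have q1 : Q ≤ Real.sqrt (b * r2) + Real.sqrt (P * zz) := by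
    rw [hQ, show M = b * r2 + P * zz from hM]
    rw [show Real.sqrt (b*r2) + Real.sqrt (P*zz)
        = Real.sqrt ((Real.sqrt (b*r2) + Real.sqrt (P*zz))^2) from
      (Real.sqrt_sq (by positivity)).symm]
    apply Real.sqrt_le_sqrt
    nlinarith [mul_nonneg hu0 hv0]
  have q2 : Real.sqrt (b * r2) ≤ b * r2 + 1 := by
    nlinarith [sq_nonneg (Real.sqrt (b * r2) - 1)]
  have q3 : Real.sqrt (P * zz) ≤ Real.sqrt (P * s2) :=
    Real.sqrt_le_sqrt (by nlinarith)
  -- exponential bound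
  have hEA : Real.exp (-(b * r2 / 8) - Real.sqrt (P * s2) / 4)
      ≤ Real.exp (1/8) * (E * E) := by
    rw [hE, ← Real.exp_add, ← Real.exp_add]
    apply Real.exp_le_exp.mpr
    nlinarith [q1, q2, q3]
  -- e^{-Q/16} ≤ 16 / Q
  have hd4 : E ≤ 16 / Q := by
    rw [hE, Real.exp_neg]
    rw [inv_le_iff_one_le_mul₀ (Real.exp_pos _), ← div_le_iff₀' (by positivity : (0:ℝ) < 16 / Q)]
    calc (1:ℝ) / (16 / Q) = Q / 16 := by field_simp
      _ ≤ 1/16 * Q + 1 := by linarith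
      _ ≤ Real.exp (1/16 * Q) := by
          have := Real.add_one_le_exp (1/16 * Q); linarith
  -- I1, I2
  have hI1 : Real.sqrt π / Real.sqrt (P/2) ≤ 2 * Real.sqrt π / Real.sqrt P := by
    rw [div_le_div_iff₀ (Real.sqrt_pos.mpr (by positivity)) (Real.sqrt_pos.mpr hP0)]
    have h1 : Real.sqrt P ≤ 2 * Real.sqrt (P / 2) := by
      rw [show (2:ℝ) * Real.sqrt (P/2) = Real.sqrt (4 * (P/2)) from ?_]
      · apply Real.sqrt_le_sqrt; linarith
      · rw [Real.sqrt_mul (by norm_num) (P/2), show Real.sqrt 4 = 2 from ?_]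
        rw [show (4:ℝ) = 2^2 by norm_num, Real.sqrt_sq (by norm_num)]
    nlinarith [Real.sqrt_nonneg π, Real.sqrt_nonneg P, Real.sqrt_pos.mpr (by positivity : (0:ℝ) < P/2)]
  have hI2 : Real.sqrt π / Real.sqrt (s2/16) = 4 * Real.sqrt π / Real.sqrt s2 := by
    rw [show s2 / 16 = s2 * (1/16) by ring, Real.sqrt_mul hs2pos.le,
      show Real.sqrt (1/16 : ℝ) = 1/4 from ?_]
    · rw [div_mul_eq_div_div]
      field_simp
    · rw [show (1/16:ℝ) = (1/4)^2 by norm_num, Real.sqrt_sq (by norm_num)]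
  -- 1/√s2 ≤ √(κ(1+κ)) b / (√P Q)
  have hd5 : 1 / Real.sqrt s2 ≤ Real.sqrt (κ * (1+κ)) * b / (Real.sqrt P * Q) := by
    have hsP : Real.sqrt P ≤ Real.sqrt κ * Real.sqrt b := by
      rw [← Real.sqrt_mul hκ.le]
      exact Real.sqrt_le_sqrt hPκ
    have hsM : Q ≤ Real.sqrt (1+κ) * Real.sqrt b * Real.sqrt s2 := by
      rw [hQ, ← Real.sqrt_mul (by positivity), ← Real.sqrt_mul (by positivity)]
      apply Real.sqrt_le_sqrt
      nlinarith
    have hss : 0 < Real.sqrt s2 := Real.sqrt_pos.mpr hs2pos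
    have hsP0 : 0 < Real.sqrt P := Real.sqrt_pos.mpr hP0
    rw [div_le_div_iff₀ hss (by positivity)]
    have key : Real.sqrt P * Q ≤ Real.sqrt (κ * (1+κ)) * b * Real.sqrt s2 := by
      have hb2 : Real.sqrt b * Real.sqrt b = b := Real.mul_self_sqrt hb0.le
      have e : Real.sqrt (κ * (1+κ)) = Real.sqrt κ * Real.sqrt (1+κ) := Real.sqrt_mul hκ.le _
      calc Real.sqrt P * Q
          ≤ (Real.sqrt κ * Real.sqrt b) * (Real.sqrt (1+κ) * Real.sqrt b * Real.sqrt s2) := by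
            apply mul_le_mul hsP hsM (by positivity) (by positivity)
        _ = (Real.sqrt κ * Real.sqrt (1+κ)) * (Real.sqrt b * Real.sqrt b) * Real.sqrt s2 := by
            ring
        _ = Real.sqrt (κ * (1+κ)) * b * Real.sqrt s2 := by rw [hb2, ← e]
    rw [one_mul]
    exact key
  -- final assembly
  set X := Real.exp (-(b * r2 / 8) - Real.sqrt (P * s2) / 4) with hX
  have hX0 : 0 < X := Real.exp_pos _
  have ht1 : X / W * (2 * b) * (Real.sqrt π / Real.sqrt (P/2))
      ≤ (Real.exp (1/8) * (16 / Q) * E) / W * (2 * b) * (2 * Real.sqrt π / Real.sqrt P) := by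
    have s1 : X ≤ Real.exp (1/8) * (16 / Q) * E := by
      refine le_trans hEA ?_
      calc Real.exp (1/8) * (E * E) ≤ Real.exp (1/8) * ((16 / Q) * E) := by gcongr
        _ = Real.exp (1/8) * (16 / Q) * E := by ring
    gcongr
  have ht1e : (Real.exp (1/8) * (16 / Q) * E) / W * (2 * b) * (2 * Real.sqrt π / Real.sqrt P)
      = ((Real.exp (1/8) * (64 * Real.sqrt π)) / W) * b / Real.sqrt P * E / Q := by
    ring
  have ht2 : X / W * (Real.sqrt π / Real.sqrt (s2/16))
      ≤ ((Real.exp (1/8) * (4 * Real.sqrt π * Real.sqrt (κ * (1+κ)))) / W) * b / Real.sqrt P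
          * E / Q := by
    rw [hI2]
    calc X / W * (4 * Real.sqrt π / Real.sqrt s2)
        ≤ (Real.exp (1/8) * (E * E)) / W * (4 * Real.sqrt π / Real.sqrt s2) := by gcongr
      _ = (Real.exp (1/8) * E) / W * (4 * Real.sqrt π) * E * (1 / Real.sqrt s2) := by ring
      _ ≤ (Real.exp (1/8) * E) / W * (4 * Real.sqrt π) * 1 *
            (Real.sqrt (κ * (1+κ)) * b / (Real.sqrt P * Q)) := by
          gcongr
      _ = ((Real.exp (1/8) * (4 * Real.sqrt π * Real.sqrt (κ * (1+κ)))) / W) * b / Real.sqrt P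
            * E / Q := by ring
  calc X / W * (2 * b) * (Real.sqrt π / Real.sqrt (P/2))
        + X / W * (Real.sqrt π / Real.sqrt (s2/16))
      ≤ ((Real.exp (1/8) * (64 * Real.sqrt π)) / W) * b / Real.sqrt P * E / Q
        + ((Real.exp (1/8) * (4 * Real.sqrt π * Real.sqrt (κ * (1+κ)))) / W) * b / Real.sqrt P
            * E / Q := add_le_add (ht1e ▸ ht1) ht2
    _ = ((Real.exp (1/8) * (64 * Real.sqrt π + 4 * Real.sqrt π * Real.sqrt (κ * (1+κ)))) / W)
          * b / Real.sqrt P * E / Q := by ring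

end Stmt17Aux

open Stmt17Aux MeasureTheory Set in
set_option maxHeartbeats 1000000 in
/-- For the free Dirac operator with constant field of strength
`b ≥ 1` in the linear gauge, and `1 ≤ P ≤ κ b`, the matrix (entrywise) norm of the
resolvent kernel satisfies
`‖(D̃² + P)⁻¹(ξ,ζ)‖ ≤ C b P^{-1/2} e^{−c|||ξ−ζ|||}/|||ξ−ζ|||`, where
`|||ξ||| = (b ξ⊥² + P ξ₃²)^{1/2}` and `C, c` are universal constants. -/
theorem stmt17 (κ : ℝ) (hκ : 0 < κ) :
    ∃ C c : ℝ, 0 < C ∧ 0 < c ∧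
      ∀ (b P : ℝ) (ξ ζ : Fin 3 → ℝ) (sgn : ℝ),
        1 ≤ b → 1 ≤ P → P ≤ κ * b → (sgn = 1 ∨ sgn = -1) → ξ ≠ ζ →
        ‖diracResolventEntry b P sgn ξ ζ‖ ≤
          C * b / Real.sqrt P *
            Real.exp (-(c * Real.sqrt (b * ((ξ 0 - ζ 0) ^ 2 + (ξ 1 - ζ 1) ^ 2)
                + P * (ξ 2 - ζ 2) ^ 2))) /
            Real.sqrt (b * ((ξ 0 - ζ 0) ^ 2 + (ξ 1 - ζ 1) ^ 2)
                + P * (ξ 2 - ζ 2) ^ 2) := by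
  have hπ : 0 < π := Real.pi_pos
  refine ⟨(Real.exp (1/8) * (64 * Real.sqrt π + 4 * Real.sqrt π * Real.sqrt (κ * (1+κ))))
      / (4 * π * Real.sqrt (4 * π)), 1/16, ?_, by norm_num, ?_⟩
  · have h1 : 0 < Real.sqrt π := Real.sqrt_pos.mpr hπ
    have h2 : 0 ≤ Real.sqrt (κ * (1+κ)) := Real.sqrt_nonneg _
    positivity
  intro b P ξ ζ sgn hb hP hPκ hsgn hne
  have hb0 : (0:ℝ) < b := lt_of_lt_of_le one_pos hb
  have hP0 : (0:ℝ) < P := lt_of_lt_of_le one_pos hP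
  set r2 := (ξ 0 - ζ 0) ^ 2 + (ξ 1 - ζ 1) ^ 2 with hr2def
  set zz := (ξ 2 - ζ 2) ^ 2 with hzzdef
  have hr2 : 0 ≤ r2 := by positivity
  have hzz : 0 ≤ zz := by positivity
  have hs2pos : 0 < r2 + zz := by
    rcases lt_or_eq_of_le (by positivity : (0:ℝ) ≤ r2 + zz) with h | h
    · exact h
    exfalso
    apply hne
    have h0 : (ξ 0 - ζ 0) ^ 2 = 0 ∧ (ξ 1 - ζ 1) ^ 2 = 0 ∧ (ξ 2 - ζ 2) ^ 2 = 0 := by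
      refine ⟨?_, ?_, ?_⟩ <;> nlinarith [sq_nonneg (ξ 0 - ζ 0), sq_nonneg (ξ 1 - ζ 1),
        sq_nonneg (ξ 2 - ζ 2)]
    funext i
    fin_cases i
    · have := pow_eq_zero_iff (n := 2) (by norm_num) |>.mp h0.1
      show ξ 0 = ζ 0
      linarith
    · have := pow_eq_zero_iff (n := 2) (by norm_num) |>.mp h0.2.1
      show ξ 1 = ζ 1
      linarith
    · have := pow_eq_zero_iff (n := 2) (by norm_num) |>.mp h0.2.2
      show ξ 2 = ζ 2
      linarith
  set K := Real.exp (-(b * r2 / 8) - Real.sqrt (P * (r2 + zz)) / 4)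
      / (4 * π * Real.sqrt (4 * π)) with hK
  have hK0 : 0 < K := by positivity
  have hPh : (0:ℝ) < P/2 := by linarith
  have hah : (0:ℝ) < (r2 + zz)/16 := by linarith
  have hint1 := (intA_int hPh).const_mul (K * (2*b))
  have hint2 := (intB_int hah).const_mul K
  have hgint : IntegrableOn (fun t : ℝ => K *
      (2 * b * (t ^ (-(1/2) : ℝ) * Real.exp (-(P/2) * t))
        + t ^ (-(3/2) : ℝ) * Real.exp (-((r2+zz)/16) / t))) (Ioi 0) := by
    refine IntegrableOn.congr_fun (hint1.add hint2) (fun t _ => ?_)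
      measurableSet_Ioi
    simp only [Pi.add_apply]
    ring
  have step1 : ‖diracResolventEntry b P sgn ξ ζ‖ ≤
      ∫ t in Ioi (0:ℝ), ‖((Real.exp (-(t * (P + sgn * b))) : ℝ) : ℂ) *
        mehlerKernel b t (ξ 0, ξ 1) (ζ 0, ζ 1) *
        ((1 / Real.sqrt (4 * π * t) : ℝ) : ℂ) *
        Complex.exp (-(((ξ 2 - ζ 2) ^ 2 / (4 * t) : ℝ) : ℂ))‖ := by
    unfold diracResolventEntry
    exact norm_integral_le_integral_norm _
  have step2 : (∫ t in Ioi (0:ℝ), ‖((Real.exp (-(t * (P + sgn * b))) : ℝ) : ℂ) *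
        mehlerKernel b t (ξ 0, ξ 1) (ζ 0, ζ 1) *
        ((1 / Real.sqrt (4 * π * t) : ℝ) : ℂ) *
        Complex.exp (-(((ξ 2 - ζ 2) ^ 2 / (4 * t) : ℝ) : ℂ))‖)
      ≤ ∫ t in Ioi (0:ℝ), K *
        (2 * b * (t ^ (-(1/2) : ℝ) * Real.exp (-(P/2) * t))
          + t ^ (-(3/2) : ℝ) * Real.exp (-((r2+zz)/16) / t)) := by
    refine integral_mono_of_nonneg (Filter.Eventually.of_forall (fun t => norm_nonneg _))
      hgint ?_
    filter_upwards [ae_restrict_mem measurableSet_Ioi] with t ht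
    rw [normEntry b t P sgn hb0 ht ξ ζ]
    exact pw hb hP ht hr2 hzz rfl hsgn
  have step3 : (∫ t in Ioi (0:ℝ), K *
        (2 * b * (t ^ (-(1/2) : ℝ) * Real.exp (-(P/2) * t))
          + t ^ (-(3/2) : ℝ) * Real.exp (-((r2+zz)/16) / t)))
      = K * (2*b) * (Real.sqrt π / Real.sqrt (P/2))
        + K * (Real.sqrt π / Real.sqrt ((r2+zz)/16)) := by
    rw [setIntegral_congr_fun measurableSet_Ioi (g := fun t =>
        (K * (2*b)) * (t ^ (-(1/2) : ℝ) * Real.exp (-(P/2) * t))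
          + K * (t ^ (-(3/2) : ℝ) * Real.exp (-((r2+zz)/16) / t))) (fun t _ => by ring)]
    rw [integral_add hint1 hint2, integral_const_mul, integral_const_mul, intA_val hPh,
      intB_val hah]
  refine le_trans step1 (le_trans step2 (le_trans (le_of_eq step3) ?_))
  rw [hK]
  exact final hκ hb hP hPκ hr2 hzz rfl hs2pos rfl
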